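/- Let S̄ = S ⊕_{d,γ} ℕ be a GSI-semigroup with S = ⟨v₀,…,v_h⟩, v₀ < ⋯ < v_h, d ≥ 2, gcd(d,γ)=1 and γ > max{d·F(S), d·v_h}. Then the set of gaps of S̄ is exactly the disjoint union {1,…,dv₀−1} ∪ {x ∈ (dv₀, γ) ∩ ℕ : x ∉ dS} ∪ A_d ∪ ⋃_{ℓ=1}^{d−2} B_{d,ℓ}, where A_d = ⋃_{k=1}^{d−1} (d(ℕ\S) + kγ) (empty when S = ℕ) and B_{d,ℓ} = {γ + (ℓγ mod d) + kd : 0 ≤ k ≤ ⌊ℓγ/d⌋ − 1}. -/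

import Mathlib

/-- A numerical semigroup: a subset of ℕ containing 0, closed under addition,
with finite complement. -/
def IsNumericalSemigroup (S : Set ℕ) : Prop :=
  0 ∈ S ∧ (∀ a ∈ S, ∀ b ∈ S, a + b ∈ S) ∧ Sᶜ.Finite

/-- Frobenius number, as an integer (so that F(ℕ) = -1). -/
noncomputable def Frob (S : Set ℕ) : ℤ :=
  sSup (((fun n : ℕ => (n : ℤ)) '' Sᶜ) ∪ {-1})

/-- Submonoid of ℕ generated by a set. -/
def GenSg (A : Set ℕ) : Set ℕ := (AddSubmonoid.closure A : Set ℕ)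

/-- The gluing S ⊕_{d,γ} ℕ = d·S + ℕ·γ. -/
def Gluing (S : Set ℕ) (d γ : ℕ) : Set ℕ :=
  {x | ∃ s ∈ S, ∃ k : ℕ, x = d * s + k * γ}

/-- e_k = gcd(v₀, …, v_k). -/
def ee (v : ℕ → ℕ) (k : ℕ) : ℕ := (Finset.range (k + 1)).gcd v

/-- (v₀,…,v_h) is a characteristic sequence. -/
def IsCharSeq (h : ℕ) (v : ℕ → ℕ) : Prop :=
  (∀ i ≤ h, 0 < v i) ∧
  (∀ k, 1 ≤ k → k ≤ h → ee v k < ee v (k - 1)) ∧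
  ee v h = 1 ∧
  ∀ k, 1 ≤ k → k + 1 ≤ h → ee v (k - 1) * v k < ee v k * v (k + 1)

/-- T is a GSI-semigroup: T = S ⊕_{d,γ} ℕ where S = ⟨A⟩ is a numerical
semigroup, d ≥ 2, gcd(d,γ)=1 and γ > max{d·F(S), d·(max A)}. -/
def IsGSI (T : Set ℕ) : Prop :=
  ∃ (A : Finset ℕ) (d γ : ℕ), A.Nonempty ∧ 2 ≤ d ∧ Nat.Coprime d γ ∧
    IsNumericalSemigroup (GenSg ↑A) ∧
    (γ : ℤ) > d * Frob (GenSg ↑A) ∧ (∀ a ∈ A, d * a < γ) ∧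
    T = Gluing (GenSg ↑A) d γ

private lemma genSg_min_le (A : Finset ℕ) (hA : A.Nonempty) {s : ℕ}
    (hs : s ∈ AddSubmonoid.closure (A : Set ℕ)) : s = 0 ∨ A.min' hA ≤ s := by
  induction hs using AddSubmonoid.closure_induction with
  | mem x hx => exact Or.inr (A.min'_le x hx)
  | zero => exact Or.inl rfl
  | add a b _ _ ha hb => rcases ha with h|h <;> rcases hb with h'|h' <;> omega

private lemma exists_residue (d γ : ℕ) (hd : 2 ≤ d) (hco : Nat.Coprime d γ) (x : ℕ) :
    ∃ k < d, k * γ ≡ x [MOD d] := by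
  haveI : NeZero d := ⟨by omega⟩
  have hu : IsUnit (γ : ZMod d) := by
    rw [← ZMod.coe_unitOfCoprime γ hco.symm]
    exact (ZMod.unitOfCoprime γ hco.symm).isUnit
  refine ⟨((x : ZMod d) * (γ : ZMod d)⁻¹).val, ZMod.val_lt _, ?_⟩
  rw [← ZMod.natCast_eq_natCast_iff]
  push_cast
  rw [ZMod.natCast_val, ZMod.cast_id, mul_assoc, ZMod.inv_mul_of_unit _ hu, mul_one]

theorem gaps_of_GSI (A : Finset ℕ) (hA : A.Nonempty) (d γ : ℕ) (hd : 2 ≤ d)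
    (hco : Nat.Coprime d γ) (hS : IsNumericalSemigroup (GenSg ↑A))
    (hγF : (γ : ℤ) > d * Frob (GenSg ↑A)) (hγA : ∀ a ∈ A, d * a < γ) :
    let S : Set ℕ := GenSg ↑A
    let v0 : ℕ := A.min' hA
    let T1 : Set ℕ := {x | 1 ≤ x ∧ x ≤ d * v0 - 1}
    let T2 : Set ℕ := {x | d * v0 < x ∧ x < γ ∧ ¬ ∃ s ∈ S, x = d * s}
    let Ad : Set ℕ :=
      {x | ∃ k, 1 ≤ k ∧ k ≤ d - 1 ∧ ∃ α, α ∉ S ∧ x = d * α + k * γ}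
    let Bd : Set ℕ :=
      {x | ∃ l, 1 ≤ l ∧ l ≤ d - 2 ∧
        ∃ k, k + 1 ≤ l * γ / d ∧ x = γ + (l * γ) % d + k * d}
    (Gluing S d γ)ᶜ = T1 ∪ T2 ∪ Ad ∪ Bd ∧
    Disjoint T1 T2 ∧ Disjoint T1 Ad ∧ Disjoint T1 Bd ∧
    Disjoint T2 Ad ∧ Disjoint T2 Bd ∧ Disjoint Ad Bd := by
  intro S v0 T1 T2 Ad Bd
  obtain ⟨h0S, haddS, hfinS⟩ := hS
  have hv0A : v0 ∈ A := A.min'_mem hA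
  have hv0S : v0 ∈ S := AddSubmonoid.subset_closure hv0A
  have hdv0γ : d * v0 < γ := hγA v0 hv0A
  have hγpos : 0 < γ := Nat.lt_of_le_of_lt (Nat.zero_le _) hdv0γ
  have hdpos : 0 < d := by omega
  -- gaps of S are bounded by the Frobenius number
  have hgap : ∀ α : ℕ, α ∉ S → d * α < γ := by
    intro α hα
    have h1 : (α : ℤ) ≤ Frob (GenSg ↑A) := by
      apply le_csSup
      · exact Set.Finite.bddAbove ((hfinS.image _).union (Set.finite_singleton _))
      · exact Or.inl ⟨α, hα, rfl⟩
    have h2 : (d : ℤ) * α ≤ d * Frob (GenSg ↑A) :=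
      mul_le_mul_of_nonneg_left h1 (by positivity)
    have h3 : ((d * α : ℕ) : ℤ) < (γ : ℤ) := by push_cast; exact lt_of_le_of_lt h2 hγF
    exact_mod_cast h3
  have hmin : ∀ s ∈ S, s ≠ 0 → v0 ≤ s := by
    intro s hs hs0
    rcases genSg_min_le A hA hs with h | h
    · exact absurd h hs0
    · exact h
  -- mod-d comparison helpers
  have hmodlt : ∀ a b : ℕ, a % d = b % d → a < d → b < d → a = b := by
    intro a b h ha hb
    rwa [Nat.mod_eq_of_lt ha, Nat.mod_eq_of_lt hb] at h
  have hmodge : ∀ a b : ℕ, a % d = b % d → a < d → d ≤ b → a + d ≤ b := by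
    intro a b h ha hb
    have hab : a ≤ b := le_trans (le_of_lt ha) hb
    obtain ⟨t, ht⟩ := (Nat.modEq_iff_dvd' hab).mp (h : a ≡ b [MOD d])
    have ht1 : 1 ≤ t := by
      rcases Nat.eq_zero_or_pos t with h0 | h0
      · exfalso
        subst h0
        rw [Nat.mul_zero] at ht
        have := Nat.sub_eq_zero_iff_le.mp ht
        omega
      · exact h0
    have h2 : d ≤ d * t := Nat.le_mul_of_pos_right d ht1
    have h3 : d ≤ b - a := ht ▸ h2
    omega
  -- the pieces avoid the gluing
  have hT1 : ∀ x ∈ T1, x ∉ Gluing S d γ := by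
    rintro x ⟨hx1, hx2⟩ ⟨s, hsS, k, rfl⟩
    rcases Nat.eq_zero_or_pos k with hk0 | hk1
    · subst hk0
      simp only [Nat.zero_mul, Nat.add_zero] at hx1 hx2
      have hs0 : s ≠ 0 := by rintro rfl; simp at hx1
      have h1 : d * v0 ≤ d * s := Nat.mul_le_mul_left d (hmin s hsS hs0)
      have hpos : 0 < d * v0 := lt_of_lt_of_le hx1 (le_trans hx2 (Nat.sub_le _ _))
      exact absurd (lt_of_le_of_lt (le_trans h1 hx2) (Nat.sub_lt hpos one_pos)) (lt_irrefl _)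
    · have hγk : γ ≤ k * γ := Nat.le_mul_of_pos_left γ hk1
      have : γ < γ := calc
        γ ≤ k * γ := hγk
        _ ≤ d * s + k * γ := Nat.le_add_left _ _
        _ ≤ d * v0 - 1 := hx2
        _ ≤ d * v0 := Nat.sub_le _ _
        _ < γ := hdv0γ
      exact absurd this (lt_irrefl γ)
  have hT2 : ∀ x ∈ T2, x ∉ Gluing S d γ := by
    rintro x ⟨hx1, hx2, hx3⟩ ⟨s, hsS, k, rfl⟩
    rcases Nat.eq_zero_or_pos k with hk0 | hk1
    · subst hk0
      exact hx3 ⟨s, hsS, by ring⟩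
    · have hγk : γ ≤ k * γ := Nat.le_mul_of_pos_left γ hk1
      exact absurd (lt_of_le_of_lt (le_trans hγk (Nat.le_add_left _ _)) hx2) (lt_irrefl _)
  have hAd : ∀ x ∈ Ad, x ∉ Gluing S d γ := by
    rintro x ⟨k, hk1, hk2, α, hαS, rfl⟩ ⟨s, hsS, k', hEq⟩
    have hm : k * γ % d = k' * γ % d := by
      have e1 : (d * α + k * γ) % d = k * γ % d := Nat.mul_add_mod d α (k * γ)
      have e2 : (d * s + k' * γ) % d = k' * γ % d := Nat.mul_add_mod d s (k' * γ)
      rw [← e1, ← e2, hEq]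
    have hkk' : k % d = k' % d := Nat.ModEq.cancel_right_of_coprime hco hm
    have hkd : k < d := by omega
    have h3 : d * α < γ := hgap α hαS
    by_cases h' : k' < d
    · have hke : k = k' := hmodlt k k' hkk' hkd h'
      subst hke
      have h4 : d * α = d * s := by linarith [hEq]
      exact hαS (Nat.eq_of_mul_eq_mul_left hdpos h4 ▸ hsS)
    · push_neg at h'
      have hkk2 : k + d ≤ k' := hmodge k k' hkk' hkd h'
      have h1 : (k + d) * γ ≤ k' * γ := Nat.mul_le_mul_right γ hkk2
      have h2 : 2 * γ ≤ d * γ := Nat.mul_le_mul_right γ hd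
      have h4 : (k + d) * γ = k * γ + d * γ := by ring
      have h5 : (0:ℕ) ≤ d * s := Nat.zero_le _
      linarith [hEq]
  have hBd : ∀ x ∈ Bd, x ∉ Gluing S d γ := by
    rintro x ⟨l, hl1, hl2, k, hk, rfl⟩ ⟨s, hsS, k', hEq⟩
    have hqr : d * (l * γ / d) + (l * γ) % d = l * γ := Nat.div_add_mod (l * γ) d
    have hld : l + 1 < d := by omega
    have hm1 : (γ + (l * γ) % d + k * d) % d = (γ + (l * γ) % d) % d :=
      Nat.add_mul_mod_self_right _ k d
    have hm2 : ((l + 1) * γ) % d = (γ + (l * γ) % d) % d := by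
      have e : (l + 1) * γ = (γ + (l * γ) % d) + d * (l * γ / d) := by
        calc (l + 1) * γ = l * γ + γ := by ring
        _ = (d * (l * γ / d) + (l * γ) % d) + γ := by rw [hqr]
        _ = (γ + (l * γ) % d) + d * (l * γ / d) := by ring
      rw [e, Nat.add_mul_mod_self_left]
    have hm3 : (d * s + k' * γ) % d = k' * γ % d := Nat.mul_add_mod d s _
    have hm : (l + 1) * γ % d = k' * γ % d := by rw [hm2, ← hm1, hEq, hm3]
    have hkk' : (l + 1) % d = k' % d := Nat.ModEq.cancel_right_of_coprime hco hm
    by_cases h' : k' < d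
    · have hke : l + 1 = k' := hmodlt _ _ hkk' hld h'
      rw [← hke] at hEq
      have e2 : (l + 1) * γ = γ + (d * (l * γ / d) + (l * γ) % d) := by rw [hqr]; ring
      rw [e2] at hEq
      have hdk : d * k = d * (s + l * γ / d) := by linarith [hEq]
      have h6 := Nat.eq_of_mul_eq_mul_left hdpos hdk
      linarith [hk]
    · push_neg at h'
      have hkk2 : (l + 1) + d ≤ k' := hmodge _ _ hkk' hld h'
      have h1 : ((l + 1) + d) * γ ≤ k' * γ := Nat.mul_le_mul_right γ hkk2
      have h2 : 2 * γ ≤ d * γ := Nat.mul_le_mul_right γ hd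
      have h3 : (k + 1) * d ≤ (l * γ / d) * d := Nat.mul_le_mul_right d hk
      have h5 : (0:ℕ) ≤ d * s := Nat.zero_le _
      have h7 : ((l + 1) + d) * γ = l * γ + γ + d * γ := by ring
      linarith [hEq, hqr]
  -- lower bounds for Ad, Bd and upper bounds for T1
  have hAdb : ∀ x ∈ Ad, γ ≤ x := by
    rintro x ⟨k, hk1, hk2, α, hαS, rfl⟩
    calc γ = 1 * γ := (one_mul γ).symm
    _ ≤ k * γ := Nat.mul_le_mul_right γ hk1
    _ ≤ d * α + k * γ := Nat.le_add_left _ _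
  have hBdb : ∀ x ∈ Bd, γ ≤ x := by
    rintro x ⟨l, hl1, hl2, k, hk, rfl⟩
    exact le_trans (Nat.le_add_right γ _) (Nat.le_add_right _ _)
  have hT1b : ∀ x ∈ T1, x < d * v0 := by
    rintro x ⟨hx1, hx2⟩
    rcases Nat.eq_zero_or_pos (d * v0) with h | h
    · rw [h] at hx2 ⊢
      omega
    · exact lt_of_le_of_lt hx2 (Nat.sub_lt h one_pos)
  refine ⟨?_, ?_, ?_, ?_, ?_, ?_, ?_⟩
  · -- the set equality
    ext x
    simp only [Set.mem_compl_iff, Set.mem_union]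
    constructor
    · intro hx
      have hx0 : x ≠ 0 := by
        rintro rfl
        exact hx ⟨0, h0S, 0, by simp⟩
      by_cases hxγ : x < γ
      · by_cases hxv : x < d * v0
        · exact Or.inl (Or.inl (Or.inl ⟨Nat.one_le_iff_ne_zero.mpr hx0, Nat.le_sub_one_of_lt hxv⟩))
        · rcases eq_or_lt_of_le (not_lt.mp hxv) with heq | hlt
          · exact absurd (⟨v0, hv0S, 0, by rw [← heq]; ring⟩ : x ∈ Gluing S d γ) hx
          · refine Or.inl (Or.inl (Or.inr ⟨hlt, hxγ, ?_⟩))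
            rintro ⟨s, hsS, rfl⟩
            exact hx ⟨s, hsS, 0, by ring⟩
      · push_neg at hxγ
        obtain ⟨k, hkd, hkmod⟩ := exists_residue d γ hd hco x
        by_cases hkx : k * γ ≤ x
        · obtain ⟨y, hy⟩ := (Nat.modEq_iff_dvd' hkx).mp hkmod
          have hxy : x = d * y + k * γ := (Nat.sub_eq_iff_eq_add hkx).mp hy
          have hyS : y ∉ S := fun h => hx ⟨y, h, k, hxy⟩
          rcases Nat.eq_zero_or_pos k with hk0 | hk1
          · exfalso
            subst hk0
            simp only [Nat.zero_mul, Nat.add_zero] at hxy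
            have := hgap y hyS
            rw [hxy] at hxγ
            exact absurd (lt_of_le_of_lt hxγ this) (lt_irrefl γ)
          · exact Or.inl (Or.inr ⟨k, hk1, by omega, y, hyS, hxy⟩)
        · push_neg at hkx
          right
          have hk2 : 2 ≤ k := by
            by_contra hc
            push_neg at hc
            interval_cases k
            · rw [Nat.zero_mul] at hkx
              omega
            · rw [Nat.one_mul] at hkx
              omega
          obtain ⟨c, rfl⟩ : ∃ c, x = γ + c := ⟨x - γ, by omega⟩
          have hkl : k = (k - 1) + 1 := by omega
          set l := k - 1 with hldef
          have h5 : l * γ + γ ≡ c + γ [MOD d] := by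
            have e1 : l * γ + γ = k * γ := by rw [hkl]; ring
            have e2 : c + γ = γ + c := by ring
            rw [e1, e2]
            exact hkmod
          have hlmod : l * γ ≡ c [MOD d] := Nat.ModEq.add_right_cancel' γ h5
          have hcmod : c % d = (l * γ) % d := hlmod.symm
          have hclt : c < l * γ := by
            have e3 : k * γ = l * γ + γ := by rw [hkl]; ring
            linarith [hkx]
          obtain ⟨t, ht⟩ := (Nat.modEq_iff_dvd' hclt.le).mp hlmod.symm
          have ht1 : 1 ≤ t := by
            rcases Nat.eq_zero_or_pos t with h0 | h0
            · exfalso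
              subst h0
              rw [Nat.mul_zero] at ht
              exact absurd hclt (not_lt.mpr (Nat.sub_eq_zero_iff_le.mp ht))
            · exact h0
          have hdt : d ≤ l * γ - c := ht ▸ Nat.le_mul_of_pos_right d ht1
          have hgeq : c + d ≤ l * γ := by
            have h8 := Nat.sub_add_cancel hclt.le
            linarith [hdt]
          have hdiv : c / d + 1 ≤ l * γ / d := by
            have h9 : (c + d) / d ≤ l * γ / d := Nat.div_le_div_right hgeq
            rwa [Nat.add_div_right c hdpos] at h9
          refine ⟨l, by omega, by omega, c / d, hdiv, ?_⟩
          rw [← hcmod, Nat.add_assoc, Nat.mod_add_div']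
    · intro hx
      rcases hx with ((h | h) | h) | h
      · exact hT1 x h
      · exact hT2 x h
      · exact hAd x h
      · exact hBd x h
  · -- T1, T2
    rw [Set.disjoint_left]
    intro x hx1 hx2
    have h1 := hT1b x hx1
    obtain ⟨h2, -, -⟩ := hx2
    exact absurd h2 (not_lt.mpr h1.le)
  · -- T1, Ad
    rw [Set.disjoint_left]
    intro x hx1 hx2
    have h1 := hT1b x hx1
    have h2 := hAdb x hx2
    exact absurd (lt_trans h1 hdv0γ) (not_lt.mpr h2)
  · -- T1, Bd
    rw [Set.disjoint_left]
    intro x hx1 hx2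
    have h1 := hT1b x hx1
    have h2 := hBdb x hx2
    exact absurd (lt_trans h1 hdv0γ) (not_lt.mpr h2)
  · -- T2, Ad
    rw [Set.disjoint_left]
    intro x hx1 hx2
    obtain ⟨-, h1, -⟩ := hx1
    exact absurd h1 (not_lt.mpr (hAdb x hx2))
  · -- T2, Bd
    rw [Set.disjoint_left]
    intro x hx1 hx2
    obtain ⟨-, h1, -⟩ := hx1
    exact absurd h1 (not_lt.mpr (hBdb x hx2))
  · -- Ad, Bd
    rw [Set.disjoint_left]
    rintro x ⟨k, hk1, hk2, α, hαS, rfl⟩ ⟨l, hl1, hl2, k', hk', hEq⟩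
    have hqr : d * (l * γ / d) + (l * γ) % d = l * γ := Nat.div_add_mod (l * γ) d
    have hld : l + 1 < d := by omega
    have hm1 : (d * α + k * γ) % d = k * γ % d := Nat.mul_add_mod d α (k * γ)
    have hm2 : ((l + 1) * γ) % d = (γ + (l * γ) % d) % d := by
      have e : (l + 1) * γ = (γ + (l * γ) % d) + d * (l * γ / d) := by
        calc (l + 1) * γ = l * γ + γ := by ring
        _ = (d * (l * γ / d) + (l * γ) % d) + γ := by rw [hqr]
        _ = (γ + (l * γ) % d) + d * (l * γ / d) := by ring
      rw [e, Nat.add_mul_mod_self_left]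
    have hm4 : (γ + (l * γ) % d + k' * d) % d = (γ + (l * γ) % d) % d :=
      Nat.add_mul_mod_self_right _ k' d
    have hm : k * γ % d = (l + 1) * γ % d := by rw [hm2, ← hm4, ← hEq, hm1]
    have hkk' : k % d = (l + 1) % d := Nat.ModEq.cancel_right_of_coprime hco hm
    have hke : k = l + 1 := hmodlt _ _ hkk' (by omega) hld
    rw [hke] at hEq
    have e2 : (l + 1) * γ = γ + (d * (l * γ / d) + (l * γ) % d) := by rw [hqr]; ring
    rw [e2] at hEq
    have hdk : d * (α + l * γ / d) = d * k' := by linarith [hEq]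
    have h6 := Nat.eq_of_mul_eq_mul_left hdpos hdk
    linarith [hk']
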